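/- Let φ : S → T be a homomorphism of inverse semigroups, let χ be a semi-character of E(S), and let s ∈ S with χ(s*·s) = true. Then for every idempotent f ∈ E(T): there exists x ∈ E(S) with χ(s*·x·s) = true and φ(x) ≤ f if and only if there exists y ∈ E(S) with χ(y) = true and φ(y) ≤ φ(s)*·f·φ(s). (That is, φ̂(s·χ) = φ(s)·φ̂(χ), where φ̂(χ)(f) = true iff some x ∈ E(S) satisfies χ(x) = true and φ(x) ≤ f, and (s·χ)(e) = χ(s*·e·s).) -/

import Mathlib

class InverseSemigroup (S : Type*) extends Semigroup S, StarMul S where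
  mul_star_mul_self : ∀ s : S, s * star s * s = s
  star_mul_star_self : ∀ s : S, star s * s * star s = star s
  idem_comm : ∀ e f : S, e * e = e → f * f = f → e * f = f * e

namespace InverseSemigroup

variable {S : Type*} [InverseSemigroup S]

lemma idem_star_mul (s : S) : (star s * s) * (star s * s) = star s * s := by
  calc (star s * s) * (star s * s) = star s * (s * star s * s) := by
        simp only [mul_assoc]
    _ = star s * s := by rw [mul_star_mul_self]

lemma mul_star_idem (s : S) : (s * star s) * (s * star s) = s * star s := by
  calc (s * star s) * (s * star s) = s * (star s * s * star s) := by
        simp only [mul_assoc]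
    _ = s * star s := by rw [star_mul_star_self]

lemma idem_mul {e f : S} (he : e * e = e) (hf : f * f = f) :
    (e * f) * (e * f) = e * f := by
  have hc : f * e = e * f := idem_comm f e hf he
  calc (e * f) * (e * f) = e * (f * e) * f := by simp only [mul_assoc]
    _ = e * (e * f) * f := by rw [hc]
    _ = (e * e) * (f * f) := by simp only [mul_assoc]
    _ = e * f := by rw [he, hf]

lemma idem_conj {e : S} (he : e * e = e) (s : S) :
    (star s * e * s) * (star s * e * s) = star s * e * s := by
  have hf : (s * star s) * (s * star s) = s * star s := mul_star_idem s
  have hc : e * (s * star s) = (s * star s) * e := idem_comm e _ he hf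
  calc (star s * e * s) * (star s * e * s)
      = star s * (e * (s * star s)) * (e * s) := by simp only [mul_assoc]
    _ = star s * ((s * star s) * e) * (e * s) := by rw [hc]
    _ = star s * (s * star s) * (e * e) * s := by simp only [mul_assoc]
    _ = star s * (s * star s) * e * s := by rw [he]
    _ = (star s * s * star s) * e * s := by simp only [mul_assoc]
    _ = star s * e * s := by rw [star_mul_star_self]

lemma conj_mul {e f : S} (_he : e * e = e) (hf : f * f = f) (s : S) :
    (star s * e * s) * (star s * f * s) = star s * (e * f) * s := by
  have hss : (s * star s) * (s * star s) = s * star s := mul_star_idem s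
  have hc : (s * star s) * f = f * (s * star s) := idem_comm _ _ hss hf
  calc (star s * e * s) * (star s * f * s)
      = star s * e * ((s * star s) * f) * s := by simp only [mul_assoc]
    _ = star s * e * (f * (s * star s)) * s := by rw [hc]
    _ = star s * (e * f) * (s * star s * s) := by simp only [mul_assoc]
    _ = star s * (e * f) * s := by rw [mul_star_mul_self]

lemma conj_ss (s : S) : star s * (s * star s) * s = star s * s := by
  calc star s * (s * star s) * s = (star s * s * star s) * s := by
        simp only [mul_assoc]
    _ = star s * s := by rw [star_mul_star_self]

end InverseSemigroup

open InverseSemigroup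

/-- The natural partial order on an inverse semigroup: `s ≤ t` iff `s = t·s*·s`. -/
def nle {S : Type*} [InverseSemigroup S] (s t : S) : Prop := s = t * (star s * s)

/-- `σ(s) = σ(t)` iff `s·e = t·e` for some idempotent `e`. -/
def sigmaEq {S : Type*} [InverseSemigroup S] (s t : S) : Prop :=
  ∃ e : S, e * e = e ∧ s * e = t * e

/-- `S` is E-unitary if every element above a nonzero idempotent is idempotent. -/
def EUnitary (S : Type*) [InverseSemigroup S] : Prop :=
  ∀ e s : S, e * e = e → nle e s → s * s = s

/-- The semilattice of idempotents of an inverse semigroup. -/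
def Idem (S : Type*) [InverseSemigroup S] : Type _ := {e : S // e * e = e}

instance {S : Type*} [InverseSemigroup S] : Mul (Idem S) :=
  ⟨fun e f => ⟨e.1 * f.1, idem_mul e.2 f.2⟩⟩

/-- A semi-character of a semilattice. -/
structure SemiChar (E : Type*) [Mul E] where
  toFun : E → Bool
  map_mul' : ∀ e f : E, toFun (e * f) = (toFun e && toFun f)
  exists_true : ∃ e : E, toFun e = true

/-- The space `Ê` of semi-characters, with the subspace topology from `Bool^E`. -/
instance {E : Type*} [Mul E] : TopologicalSpace (SemiChar E) :=
  TopologicalSpace.induced (fun χ => χ.toFun) Pi.topologicalSpace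

/-- For `e` idempotent, `s*·e·s` is idempotent. -/
def conjIdem {S : Type*} [InverseSemigroup S] (s : S) (e : Idem S) : Idem S :=
  ⟨star s * e.1 * s, idem_conj e.2 s⟩

/-- The semi-character `s·χ` defined by `(s·χ)(e) = χ(s*·e·s)`. -/
def sDot {S : Type*} [InverseSemigroup S] (s : S) (χ : SemiChar (Idem S))
    (h : χ.toFun ⟨star s * s, idem_star_mul s⟩ = true) : SemiChar (Idem S) where
  toFun e := χ.toFun (conjIdem s e)
  map_mul' e f := by
    have heq : conjIdem s (e * f) = conjIdem s e * conjIdem s f :=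
      Subtype.ext (conj_mul e.2 f.2 s).symm
    simp only [heq, χ.map_mul']
  exists_true := ⟨⟨s * star s, mul_star_idem s⟩, by
    have heq : conjIdem s ⟨s * star s, mul_star_idem s⟩
        = (⟨star s * s, idem_star_mul s⟩ : Idem S) := Subtype.ext (conj_ss s)
    simp only [heq]; exact h⟩

section Aux

variable {S : Type*} [InverseSemigroup S]

lemma star_idem {e : S} (he : e * e = e) : star e = e := by
  have hf : star e * star e = star e := by rw [← star_mul, he]
  have hc : e * star e = star e * e := idem_comm e (star e) he hf
  have h1 : e = e * star e := by
    calc e = e * star e * e := (mul_star_mul_self e).symm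
      _ = e * (star e * e) := mul_assoc _ _ _
      _ = e * (e * star e) := by rw [← hc]
      _ = e * e * star e := (mul_assoc _ _ _).symm
      _ = e * star e := by rw [he]
  have h2 : star e = e * star e := by
    calc star e = star e * e * star e := (star_mul_star_self e).symm
      _ = star e * (e * star e) := mul_assoc _ _ _
      _ = star e * (star e * e) := by rw [hc]
      _ = star e * star e * e := (mul_assoc _ _ _).symm
      _ = star e * e := by rw [hf]
      _ = e * star e := hc.symm
  exact h2.trans h1.symm

lemma nle_idem_iff {a f : S} (ha : a * a = a) : nle a f ↔ a = f * a := by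
  unfold nle
  rw [star_idem ha, ha]

lemma conj_le {h f t : S} (hh : h * h = h) (hf : f * f = f)
    (hle : h = (star t * f * t) * h) : t * h * star t = f * (t * h * star t) := by
  have hu : (t * star t) * (t * star t) = t * star t := mul_star_idem t
  have hc : f * (t * star t) = (t * star t) * f := idem_comm f _ hf hu
  calc t * h * star t
      = t * ((star t * f * t) * h) * star t := by rw [← hle]
    _ = (t * star t) * f * (t * h * star t) := by simp only [mul_assoc]
    _ = (t * star t) * (f * f) * (t * h * star t) := by rw [hf]
    _ = ((t * star t) * f) * (f * (t * h * star t)) := by simp only [mul_assoc]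
    _ = (f * (t * star t)) * (f * (t * h * star t)) := by rw [hc]
    _ = f * ((t * star t) * f) * (t * h * star t) := by simp only [mul_assoc]
    _ = f * (f * (t * star t)) * (t * h * star t) := by rw [hc]
    _ = f * (f * ((t * star t) * (t * h * star t))) := by simp only [mul_assoc]
    _ = f * (f * (t * (star t * t) * (h * star t))) := by simp only [mul_assoc]
    _ = f * (f * ((t * star t * t) * (h * star t))) := by simp only [mul_assoc]
    _ = f * (f * (t * (h * star t))) := by rw [mul_star_mul_self]
    _ = (f * f) * (t * (h * star t)) := by simp only [mul_assoc]
    _ = f * (t * (h * star t)) := by rw [hf]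
    _ = f * (t * h * star t) := by simp only [mul_assoc]

end Aux

theorem stmt13 {S T : Type*} [InverseSemigroup S] [InverseSemigroup T]
    (φ : S → T) (hhom : ∀ x y : S, φ (x * y) = φ x * φ y)
    (hstar : ∀ x : S, φ (star x) = star (φ x))
    (χ : SemiChar (Idem S)) (s : S)
    (hs : χ.toFun ⟨star s * s, idem_star_mul s⟩ = true) :
    ∀ f : T, f * f = f →
      ((∃ x : Idem S, χ.toFun (conjIdem s x) = true ∧ nle (φ x.1) f) ↔
        (∃ y : Idem S, χ.toFun y = true ∧ nle (φ y.1) (star (φ s) * f * φ s))) := by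
  intro f hf
  set t := φ s with htdef
  constructor
  · rintro ⟨x, hx, hle⟩
    refine ⟨conjIdem s x, hx, ?_⟩
    have hg : φ x.1 * φ x.1 = φ x.1 := by rw [← hhom, x.2]
    have hφc : φ (conjIdem s x).1 = star t * φ x.1 * t := by
      show φ (star s * x.1 * s) = _
      rw [hhom, hhom, hstar]
    have hac : (star t * φ x.1 * t) * (star t * φ x.1 * t) = star t * φ x.1 * t :=
      idem_conj hg t
    rw [hφc, nle_idem_iff hac]
    have hle' : φ x.1 = f * φ x.1 := by
      rw [nle_idem_iff hg] at hle; exact hle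
    calc star t * φ x.1 * t
        = star t * (f * φ x.1) * t := by rw [← hle']
      _ = (star t * f * t) * (star t * φ x.1 * t) := (conj_mul hf hg t).symm
  · rintro ⟨y, hy, hle⟩
    have hx2 : (s * y.1 * star s) * (s * y.1 * star s) = s * y.1 * star s := by
      have := idem_conj y.2 (star s); rwa [star_star] at this
    refine ⟨⟨s * y.1 * star s, hx2⟩, ?_, ?_⟩
    · have heq : conjIdem s ⟨s * y.1 * star s, hx2⟩ =
          ((⟨star s * s, idem_star_mul s⟩ * y) * ⟨star s * s, idem_star_mul s⟩ :
            Idem S) := by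
        apply Subtype.ext
        show star s * (s * y.1 * star s) * s = (star s * s * y.1) * (star s * s)
        simp only [mul_assoc]
      rw [heq]; erw [χ.map_mul', χ.map_mul', hs, hy]; rfl
    · have hh : φ y.1 * φ y.1 = φ y.1 := by rw [← hhom, y.2]
      have hφc : φ (s * y.1 * star s) = t * φ y.1 * star t := by
        rw [hhom, hhom, hstar]
      have hac : (t * φ y.1 * star t) * (t * φ y.1 * star t) = t * φ y.1 * star t := by
        have := idem_conj hh (star t); rwa [star_star] at this
      have hle' : φ y.1 = (star t * f * t) * φ y.1 := by
        rw [nle_idem_iff hh] at hle; exact hle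
      show nle (φ (s * y.1 * star s)) f
      rw [hφc, nle_idem_iff hac]
      exact conj_le hh hf hle'
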